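/- arXiv:2407.13979 — 4 statements merged into one kernel-verified Lean document; each statement's English description precedes it below -/
import Mathlib

section
/- For all nonnegative reals x_1, ..., x_n, we have ∑_{i=1}^n γ(x_i) ≤ √n · γ(∑_{i=1}^n x_i), where γ(x) = x for x < 1 and γ(x) = √x for x ≥ 1. -/
/-- `γ(x) = x` for `x < 1` and `γ(x) = √x` for `x ≥ 1`. -/
noncomputable def gamma (x : ℝ) : ℝ := if x < 1 then x else Real.sqrt x

lemma gamma_le_sqrt {x : ℝ} (hx : 0 ≤ x) : gamma x ≤ Real.sqrt x := by
  unfold gamma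
  split_ifs with h
  · nlinarith [Real.sq_sqrt hx, Real.sqrt_nonneg x, Real.sqrt_le_one.mpr (le_of_lt h) ]
  · exact le_rfl

/-- For nonnegative reals `x₁, …, xₙ`, `∑ γ(xᵢ) ≤ √n · γ(∑ xᵢ)`. -/
theorem sum_gamma_le_sqrt_mul_gamma_sum (n : ℕ) (x : Fin n → ℝ) (hx : ∀ i, 0 ≤ x i) :
    ∑ i, gamma (x i) ≤ Real.sqrt n * gamma (∑ i, x i) := by
  rcases Nat.eq_zero_or_pos n with hn | hn
  · subst hn; simp
  rcases lt_or_ge (∑ i, x i) 1 with hs | hs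
  · have hxi : ∀ i, x i < 1 := fun i => lt_of_le_of_lt
      (Finset.single_le_sum (fun j _ => hx j) (Finset.mem_univ i)) hs
    have h1 : ∑ i, gamma (x i) = ∑ i, x i := by
      apply Finset.sum_congr rfl; intro i _; simp [gamma, hxi i]
    have h2 : gamma (∑ i, x i) = ∑ i, x i := by simp [gamma, hs]
    rw [h1, h2]
    have hs0 : 0 ≤ ∑ i, x i := Finset.sum_nonneg fun i _ => hx i
    have hn1 : (1:ℝ) ≤ Real.sqrt n := by
      rw [show (1:ℝ) = Real.sqrt 1 by simp]
      exact Real.sqrt_le_sqrt (by exact_mod_cast hn)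
    nlinarith
  · have h2 : gamma (∑ i, x i) = Real.sqrt (∑ i, x i) := by
      simp [gamma, not_lt.mpr hs]
    rw [h2]
    calc ∑ i, gamma (x i) ≤ ∑ i, Real.sqrt (x i) :=
          Finset.sum_le_sum fun i _ => gamma_le_sqrt (hx i)
      _ = ∑ i, Real.sqrt 1 * Real.sqrt (x i) := by simp
      _ ≤ Real.sqrt (∑ _i : Fin n, (1:ℝ)) * Real.sqrt (∑ i, x i) :=
          Real.sum_sqrt_mul_sqrt_le _ (fun _ => zero_le_one) hx
      _ = Real.sqrt n * Real.sqrt (∑ i, x i) := by simp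
end

section
/- Let q_t ∈ {0,1} and r_t ∈ [0,1] be adapted processes on [T] with filtration (F_t), where r_t is F_{t-1}-measurable and P(q_t = 1 | F_{t-1}) ≥ r_t. Fix θ > 0 and let τ_θ be the first time t with R_t := ∑_{s≤t} r_s ≥ θ (or ∞). Then P(∑_{t=1}^{τ_θ} q_t ≥ 1) ≥ (1 - e^{-θ}) · P(τ_θ < ∞). -/
open MeasureTheory

open Classical in
/-- real indicator of "some success in (t, T] before τ" -/
noncomputable def dI {Ω : Type*} (T : ℕ) (q : ℕ → Ω → ℝ) (τ : Ω → ℕ∞) (t : ℕ) (ω : Ω) : ℝ :=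
  if ∃ s : ℕ, t + 1 ≤ s ∧ s ≤ T ∧ (s : ℕ∞) ≤ τ ω ∧ q s ω = 1 then 1 else 0

open Classical in
/-- real indicator of `s ≤ τ` -/
noncomputable def tI {Ω : Type*} (τ : Ω → ℕ∞) (s : ℕ) (ω : Ω) : ℝ :=
  if (s : ℕ∞) ≤ τ ω then 1 else 0

open Classical in
/-- real indicator of `τ = ∞` -/
noncomputable def bI {Ω : Type*} (τ : Ω → ℕ∞) (ω : Ω) : ℝ :=
  if τ ω = ⊤ then 1 else 0

/-- Auxiliary lemma: if `q_t ∈ {0,1}` has conditional success probability at least the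
`F_{t-1}`-measurable `r_t ∈ [0,1]`, and `τ_θ` is the first time `R_t = ∑_{s≤t} r_s`
reaches `θ`, then `P(∑_{t=1}^{τ_θ} q_t ≥ 1) ≥ (1 - e^{-θ})·P(τ_θ < ∞)`. -/
theorem auxiliary_stopping_lower_bound
    {Ω : Type*} {m0 : MeasurableSpace Ω} (μ : Measure Ω) [IsProbabilityMeasure μ]
    (ℱ : Filtration ℕ m0) (T : ℕ)
    (q r : ℕ → Ω → ℝ)
    (hq01 : ∀ t ω, q t ω = 0 ∨ q t ω = 1)
    (hr01 : ∀ t ω, r t ω ∈ Set.Icc (0:ℝ) 1)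
    (hqadapt : ∀ t, Measurable[ℱ t] (q t))
    (hradapt : ∀ t, 1 ≤ t → Measurable[ℱ (t - 1)] (r t))
    (hcond : ∀ t, 1 ≤ t → t ≤ T → ∀ᵐ ω ∂μ, r t ω ≤ (μ[q t | ℱ (t - 1)]) ω)
    (θ : ℝ) (hθ : 0 < θ)
    (R : ℕ → Ω → ℝ) (hR : ∀ t ω, R t ω = ∑ s ∈ Finset.Icc 1 t, r s ω)
    (τ : Ω → ℕ∞)
    (hτ : ∀ ω, τ ω = sInf {u : ℕ∞ | ∃ t : ℕ, u = (t : ℕ∞) ∧ 1 ≤ t ∧ t ≤ T ∧ θ ≤ R t ω}) :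
    (μ {ω | ∃ t : ℕ, 1 ≤ t ∧ t ≤ T ∧ (t : ℕ∞) ≤ τ ω ∧ q t ω = 1}).toReal ≥
      (1 - Real.exp (-θ)) * (μ {ω | τ ω ≠ ⊤}).toReal := by
  classical
  -- basic facts
  have hr0 : ∀ t ω, 0 ≤ r t ω := fun t ω => (hr01 t ω).1
  have hr1 : ∀ t ω, r t ω ≤ 1 := fun t ω => (hr01 t ω).2
  have hRmono : ∀ (ω : Ω) ⦃a b : ℕ⦄, a ≤ b → R a ω ≤ R b ω := by
    intro ω a b hab
    rw [hR, hR]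
    exact Finset.sum_le_sum_of_subset_of_nonneg (Finset.Icc_subset_Icc_right hab)
      (fun i _ _ => hr0 i ω)
  have hR0 : ∀ ω, R 0 ω = 0 := by intro ω; rw [hR]; simp
  have hRub : ∀ (t : ℕ) ω, R t ω ≤ t := by
    intro t ω
    rw [hR]
    calc ∑ s ∈ Finset.Icc 1 t, r s ω ≤ ∑ s ∈ Finset.Icc 1 t, 1 :=
          Finset.sum_le_sum (fun i _ => hr1 i ω)
      _ = t := by simp [Nat.card_Icc]
  have hRsucc : ∀ (u : ℕ) ω, R (u+1) ω = R u ω + r (u+1) ω := by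
    intro u ω
    rw [hR, hR, Finset.sum_Icc_succ_top (by omega : 1 ≤ u + 1)]
  -- characterization of τ
  have htle : ∀ (s : ℕ) ω, s ≤ T + 1 → ((s : ℕ∞) ≤ τ ω ↔ ∀ u, 1 ≤ u → u < s → R u ω < θ) := by
    intro s ω hs
    rw [hτ, le_sInf_iff]
    constructor
    · intro H u h1 hus
      by_contra hcon
      have hle : θ ≤ R u ω := le_of_not_gt hcon
      have := H (u : ℕ∞) ⟨u, rfl, h1, by omega, hle⟩
      have : s ≤ u := by exact_mod_cast this
      omega
    · rintro H b ⟨u, rfl, h1, huT, hle⟩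
      have : ¬ u < s := fun hc => absurd hle (not_le_of_gt (H u h1 hc))
      exact_mod_cast (by omega : s ≤ u)
  have hbot : ∀ ω, (τ ω = ⊤ ↔ ∀ u, 1 ≤ u → u ≤ T → R u ω < θ) := by
    intro ω
    rw [hτ, sInf_eq_top]
    constructor
    · intro H u h1 huT
      by_contra hcon
      have hle : θ ≤ R u ω := le_of_not_gt hcon
      have := H (u : ℕ∞) ⟨u, rfl, h1, huT, hle⟩
      exact (ENat.coe_ne_top u) this
    · rintro H b ⟨u, rfl, h1, huT, hle⟩
      exact absurd hle (not_le_of_gt (H u h1 huT))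
  have htleR : ∀ (t : ℕ) ω, t ≤ T → (((t+1 : ℕ) : ℕ∞) ≤ τ ω ↔ R t ω < θ) := by
    intro t ω hT
    rw [htle (t+1) ω (by omega)]
    constructor
    · intro H
      rcases Nat.eq_zero_or_pos t with h0 | hpos
      · rw [h0, hR0]; exact hθ
      · exact H t hpos (by omega)
    · intro H u h1 hu
      exact lt_of_le_of_lt (hRmono ω (by omega : u ≤ t)) H
  have hFpos : ∀ (u : ℕ) ω, u ≤ T → τ ω = ⊤ → 0 ≤ 1 - Real.exp (R u ω - θ) := by
    intro u ω huT htop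
    have hRu : R u ω < θ := by
      rcases Nat.eq_zero_or_pos u with h0 | hpos
      · rw [h0, hR0]; exact hθ
      · exact (hbot ω).1 htop u hpos huT
    have : Real.exp (R u ω - θ) ≤ 1 := Real.exp_le_one_iff.2 (by linarith)
    linarith
  -- measurability
  have hqm : ∀ s, Measurable (q s) := fun s => (hqadapt s).mono (ℱ.le s) le_rfl
  have hrm : ∀ s, 1 ≤ s → Measurable (r s) :=
    fun s hs => (hradapt s hs).mono (ℱ.le _) le_rfl
  have hRFm : ∀ u t, u ≤ t + 1 → Measurable[ℱ t] (R u) := by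
    intro u t hut
    have : R u = fun ω => ∑ s ∈ Finset.Icc 1 u, r s ω := funext fun ω => hR u ω
    rw [this]
    apply Finset.measurable_sum
    intro s hs
    rw [Finset.mem_Icc] at hs
    exact (hradapt s hs.1).mono (ℱ.mono (by omega)) le_rfl
  have hRm : ∀ u, Measurable (R u) := fun u => (hRFm u u (by omega)).mono (ℱ.le u) le_rfl
  have htleSet : ∀ (s t : ℕ), s ≤ T + 1 → s ≤ t + 1 →
      MeasurableSet[ℱ t] {ω | (s : ℕ∞) ≤ τ ω} := by
    intro s t hsT hst
    have hset : {ω | (s : ℕ∞) ≤ τ ω} = ⋂ u ∈ Finset.Ico 1 s, {ω | R u ω < θ} := by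
      ext ω
      simp only [Set.mem_setOf_eq, Set.mem_iInter, Finset.mem_Ico, htle s ω hsT]
      exact ⟨fun H u hu => H u hu.1 hu.2, fun H u h1 hus => H u ⟨h1, hus⟩⟩
    rw [hset]
    exact Finset.measurableSet_biInter _ fun u hu => by
      rw [Finset.mem_Ico] at hu
      exact measurableSet_lt (hRFm u t (by omega)) measurable_const
  have htIm : ∀ (s t : ℕ), s ≤ T + 1 → s ≤ t + 1 → Measurable[ℱ t] (tI τ s) := by
    intro s t hsT hst
    exact Measurable.ite (htleSet s t hsT hst) measurable_const measurable_const
  have htIm0 : ∀ (s : ℕ), s ≤ T + 1 → Measurable (tI τ s) :=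
    fun s hs => (htIm s T hs (by omega)).mono (ℱ.le T) le_rfl
  have hbSet : MeasurableSet {ω | τ ω = ⊤} := by
    have hset : {ω | τ ω = ⊤} = ⋂ u ∈ Finset.Icc 1 T, {ω | R u ω < θ} := by
      ext ω
      simp only [Set.mem_setOf_eq, Set.mem_iInter, Finset.mem_Icc, hbot ω]
      exact ⟨fun H u hu => H u hu.1 hu.2, fun H u h1 hus => H u ⟨h1, hus⟩⟩
    rw [hset]
    exact Finset.measurableSet_biInter _ fun u _ => measurableSet_lt (hRm u) measurable_const
  have hbIm : Measurable (bI τ) := Measurable.ite hbSet measurable_const measurable_const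
  have hdSet : ∀ t, MeasurableSet {ω | ∃ s : ℕ, t + 1 ≤ s ∧ s ≤ T ∧ (s : ℕ∞) ≤ τ ω ∧ q s ω = 1} := by
    intro t
    have hset : {ω | ∃ s : ℕ, t + 1 ≤ s ∧ s ≤ T ∧ (s : ℕ∞) ≤ τ ω ∧ q s ω = 1}
        = ⋃ s ∈ Finset.Icc (t+1) T, ({ω | (s : ℕ∞) ≤ τ ω} ∩ {ω | q s ω = 1}) := by
      ext ω
      simp only [Set.mem_setOf_eq, Set.mem_iUnion, Finset.mem_Icc, Set.mem_inter_iff]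
      exact ⟨fun ⟨s, h1, h2, h3, h4⟩ => ⟨s, ⟨h1, h2⟩, h3, h4⟩,
        fun ⟨s, ⟨h1, h2⟩, h3, h4⟩ => ⟨s, h1, h2, h3, h4⟩⟩
    rw [hset]
    refine Finset.measurableSet_biUnion _ fun s hs => ?_
    rw [Finset.mem_Icc] at hs
    exact (ℱ.le T _ (htleSet s T (by omega) (by omega))).inter
      ((hqm s) (measurableSet_singleton 1))
  have hdIm : ∀ t, Measurable (dI T q τ t) :=
    fun t => Measurable.ite (hdSet t) measurable_const measurable_const
  -- boundedness facts
  set E : ℝ := Real.exp ((T : ℝ) + 1) with hE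
  have hE1 : 1 ≤ E := by
    rw [hE]
    calc (1:ℝ) = Real.exp 0 := (Real.exp_zero).symm
      _ ≤ _ := Real.exp_le_exp.2 (by positivity)
  have hexpRb : ∀ (u : ℕ) ω, u ≤ T + 1 → Real.exp (R u ω - θ) ≤ E := by
    intro u ω hu
    rw [hE]
    apply Real.exp_le_exp.2
    have h1 := hRub u ω
    have h2 : (u : ℝ) ≤ (T : ℝ) + 1 := by exact_mod_cast hu
    linarith
  have hd01 : ∀ t ω, dI T q τ t ω = 0 ∨ dI T q τ t ω = 1 := by
    intro t ω; unfold dI; split <;> simp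
  have ht01 : ∀ s ω, tI τ s ω = 0 ∨ tI τ s ω = 1 := by
    intro s ω; unfold tI; split <;> simp
  have hb01 : ∀ ω, bI τ ω = 0 ∨ bI τ ω = 1 := by
    intro ω; unfold bI; split <;> simp
  have hq0 : ∀ s ω, 0 ≤ q s ω := by
    intro s ω; rcases hq01 s ω with h | h <;> rw [h] <;> norm_num
  have hq1 : ∀ s ω, q s ω ≤ 1 := by
    intro s ω; rcases hq01 s ω with h | h <;> rw [h] <;> norm_num
  -- integrability helper
  have hInt : ∀ (f : Ω → ℝ) (C : ℝ), Measurable f → (∀ ω, |f ω| ≤ C) → Integrable f μ := by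
    intro f C hf hb
    exact (integrable_const C).mono' hf.aestronglyMeasurable (Filter.Eventually.of_forall hb)
  -- conditional expectation step
  have hq_ge_r : ∀ (t : ℕ), 1 ≤ t → t ≤ T → ∀ h : Ω → ℝ, Measurable[ℱ (t-1)] h →
      (∀ ω, 0 ≤ h ω) → (∀ ω, h ω ≤ E) →
      ∫ ω, h ω * r t ω ∂μ ≤ ∫ ω, h ω * q t ω ∂μ := by
    intro t ht1 htT h hmeas h0 hb
    have hm : ℱ (t-1) ≤ m0 := ℱ.le _
    have hhm0 : Measurable h := hmeas.mono hm le_rfl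
    have habs : ∀ ω, |h ω| ≤ E := fun ω => by rw [abs_of_nonneg (h0 ω)]; exact hb ω
    have hqi : Integrable (q t) μ := hInt _ 1 (hqm t)
      (fun ω => by rcases hq01 t ω with hh | hh <;> rw [hh] <;> norm_num)
    have hhq : Integrable (h * q t) μ := hInt _ E ((hhm0).mul (hqm t)) (fun ω => by
      show |h ω * q t ω| ≤ E
      rw [abs_mul, abs_of_nonneg (h0 ω), abs_of_nonneg (hq0 t ω)]
      calc h ω * q t ω ≤ h ω * 1 := mul_le_mul_of_nonneg_left (hq1 t ω) (h0 ω)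
        _ ≤ E := by rw [mul_one]; exact hb ω)
    have hpull : μ[h * q t | ℱ (t-1)] =ᵐ[μ] h * μ[q t | ℱ (t-1)] :=
      condExp_mul_of_stronglyMeasurable_left hmeas.stronglyMeasurable hhq hqi
    have e1 : ∫ ω, h ω * q t ω ∂μ = ∫ ω, (μ[h * q t | ℱ (t-1)]) ω ∂μ :=
      (integral_condExp hm).symm
    have e2 : ∫ ω, (μ[h * q t | ℱ (t-1)]) ω ∂μ = ∫ ω, h ω * (μ[q t | ℱ (t-1)]) ω ∂μ :=
      integral_congr_ae hpull
    have hintc : Integrable (fun ω => h ω * (μ[q t | ℱ (t-1)]) ω) μ :=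
      integrable_condExp.bdd_mul hhm0.aestronglyMeasurable
        (Filter.Eventually.of_forall fun ω => by rw [Real.norm_eq_abs]; exact habs ω)
    have hintr : Integrable (fun ω => h ω * r t ω) μ := hInt _ E ((hhm0).mul (hrm t ht1))
      (fun ω => by
        rw [abs_mul, abs_of_nonneg (h0 ω), abs_of_nonneg (hr0 t ω)]
        calc h ω * r t ω ≤ h ω * 1 := mul_le_mul_of_nonneg_left (hr1 t ω) (h0 ω)
          _ ≤ E := by rw [mul_one]; exact hb ω)
    have e3 : ∫ ω, h ω * r t ω ∂μ ≤ ∫ ω, h ω * (μ[q t | ℱ (t-1)]) ω ∂μ := by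
      refine integral_mono_ae hintr hintc ?_
      filter_upwards [hcond t ht1 htT] with ω hω
      exact mul_le_mul_of_nonneg_left hω (h0 ω)
    rw [e1, e2]; exact e3
  have hexp1 : ∀ x : ℝ, (1 - x) * Real.exp x ≤ 1 := by
    intro x
    have h1 : 1 - x ≤ Real.exp (-x) := by
      have := Real.add_one_le_exp (-x); linarith
    calc (1 - x) * Real.exp x ≤ Real.exp (-x) * Real.exp x :=
          mul_le_mul_of_nonneg_right h1 (Real.exp_pos x).le
      _ = 1 := by rw [← Real.exp_add]; simp
  have h01abs : ∀ x : ℝ, x = 0 ∨ x = 1 → |x| ≤ 1 := by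
    rintro x (rfl | rfl) <;> norm_num
  have hbd : ∀ (f1 f2 : Ω → ℝ) (C : ℝ), (∀ ω, |f1 ω| ≤ 1) → (∀ ω, |f2 ω| ≤ C) →
      ∀ ω, |f1 ω * f2 ω| ≤ C := by
    intro f1 f2 C h1 h2 ω
    rw [abs_mul]
    calc |f1 ω| * |f2 ω| ≤ 1 * C := mul_le_mul (h1 ω) (h2 ω) (abs_nonneg _) zero_le_one
      _ = C := one_mul C
  have hFabs : ∀ (u : ℕ) ω, u ≤ T + 1 → |1 - Real.exp (R u ω - θ)| ≤ 1 + E := by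
    intro u ω hu
    have h1 := hexpRb u ω hu
    have h2 := (Real.exp_pos (R u ω - θ)).le
    rw [abs_le]; constructor <;> [linarith; linarith [hE1]]
  have hmaxabs : ∀ (u : ℕ) ω, u ≤ T + 1 → |max 0 (1 - Real.exp (R u ω - θ))| ≤ 1 + E := by
    intro u ω hu
    rw [abs_of_nonneg (le_max_left _ _)]
    exact max_le (by linarith [hE1]) (le_trans (le_abs_self _) (hFabs u ω hu))
  have key : ∀ k t, t + k = T → ∀ g : Ω → ℝ, Measurable[ℱ t] g → (∀ ω, 0 ≤ g ω) →
        (∀ ω, g ω ≤ 1) →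
        ∫ ω, g ω * max 0 (1 - Real.exp (R t ω - θ)) ∂μ ≤
        ∫ ω, g ω * (dI T q τ t ω + (1 - Real.exp (R t ω - θ)) * bI τ ω) ∂μ := by
    intro k
    induction k with
    | zero =>
      intro t ht g hg hg0 hg1
      have htT : t = T := by omega
      have hgem : Measurable g := hg.mono (ℱ.le t) le_rfl
      have habs_g : ∀ ω, |g ω| ≤ 1 := fun ω => abs_le.2 ⟨by linarith [hg0 ω], hg1 ω⟩
      have hmF : Measurable (fun ω => 1 - Real.exp (R t ω - θ)) :=
        measurable_const.sub (((hRm t).sub measurable_const).exp)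
      have int1 : Integrable (fun ω => g ω * max 0 (1 - Real.exp (R t ω - θ))) μ := by
        refine hInt _ (1 + E) (hgem.mul (measurable_const.max hmF)) ?_
        exact hbd _ _ _ habs_g (fun ω => hmaxabs t ω (by omega))
      have int2 : Integrable
          (fun ω => g ω * (dI T q τ t ω + (1 - Real.exp (R t ω - θ)) * bI τ ω)) μ := by
        refine hInt _ (2 + E) (hgem.mul ((hdIm t).add (hmF.mul hbIm))) ?_
        refine hbd _ _ _ habs_g (fun ω => ?_)
        have h1 := h01abs _ (hd01 t ω)
        have h2 : |(1 - Real.exp (R t ω - θ)) * bI τ ω| ≤ 1 + E := by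
          rw [abs_mul]
          calc |1 - Real.exp (R t ω - θ)| * |bI τ ω| ≤ (1 + E) * 1 :=
                mul_le_mul (hFabs t ω (by omega)) (h01abs _ (hb01 ω)) (abs_nonneg _)
                  (by linarith [hE1])
            _ = 1 + E := mul_one _
        calc |dI T q τ t ω + (1 - Real.exp (R t ω - θ)) * bI τ ω|
            ≤ |dI T q τ t ω| + |(1 - Real.exp (R t ω - θ)) * bI τ ω| := abs_add_le _ _
          _ ≤ 1 + (1 + E) := add_le_add h1 h2
          _ = 2 + E := by ring
      refine integral_mono int1 int2 (fun ω => ?_)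
      refine mul_le_mul_of_nonneg_left ?_ (hg0 ω)
      have hd : dI T q τ t ω = 0 := by
        unfold dI; exact if_neg (by rintro ⟨s, h1, h2, -, -⟩; omega)
      rw [hd, zero_add]
      by_cases hc : τ ω = ⊤
      · have hb : bI τ ω = 1 := by unfold bI; exact if_pos hc
        rw [hb, mul_one]
        exact max_le (hFpos t ω (by omega) hc) le_rfl
      · have hb : bI τ ω = 0 := by unfold bI; exact if_neg hc
        rw [hb, mul_zero]
        have hex : ¬ ∀ u, 1 ≤ u → u ≤ T → R u ω < θ := fun H => hc ((hbot ω).2 H)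
        push_neg at hex
        obtain ⟨u, h1, h2, hge⟩ := hex
        have hTθ : θ ≤ R t ω := le_trans hge (hRmono ω (show u ≤ t by omega))
        have : (1:ℝ) ≤ Real.exp (R t ω - θ) := by
          have := Real.exp_le_exp.2 (show (0:ℝ) ≤ R t ω - θ by linarith)
          rwa [Real.exp_zero] at this
        exact max_le le_rfl (by linarith)
    | succ k ih =>
      intro t ht g hg hg0 hg1
      have hT1 : t + 1 ≤ T := by omega
      have hgem : Measurable g := hg.mono (ℱ.le t) le_rfl
      have hgT : Measurable[ℱ (t+1)] g := hg.mono (ℱ.mono (Nat.le_succ t)) le_rfl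
      have habs_g : ∀ ω, |g ω| ≤ 1 := fun ω => abs_le.2 ⟨by linarith [hg0 ω], hg1 ω⟩
      have habs_tl : ∀ ω, |tI τ (t+1) ω| ≤ 1 := fun ω => h01abs _ (ht01 (t+1) ω)
      have htl0 : ∀ ω, 0 ≤ tI τ (t+1) ω := fun ω => by
        rcases ht01 (t+1) ω with h | h <;> rw [h] <;> norm_num
      have habs_1q : ∀ ω, |1 - q (t+1) ω| ≤ 1 := fun ω =>
        abs_le.2 ⟨by linarith [hq1 (t+1) ω], by linarith [hq0 (t+1) ω]⟩
      have hg' : ∀ ω, 0 ≤ g ω * (1 - q (t+1) ω) := fun ω =>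
        mul_nonneg (hg0 ω) (by linarith [hq1 (t+1) ω])
      have hg'1 : ∀ ω, g ω * (1 - q (t+1) ω) ≤ 1 := fun ω =>
        mul_le_one₀ (hg1 ω) (by linarith [hq1 (t+1) ω]) (by linarith [hq0 (t+1) ω])
      have habs_g' : ∀ ω, |g ω * (1 - q (t+1) ω)| ≤ 1 := hbd _ _ _ habs_g habs_1q
      -- measurability of building blocks
      have hmF0 : Measurable (fun ω => 1 - Real.exp (R t ω - θ)) :=
        measurable_const.sub (((hRm t).sub measurable_const).exp)
      have hmF1 : Measurable (fun ω => 1 - Real.exp (R (t+1) ω - θ)) :=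
        measurable_const.sub (((hRm (t+1)).sub measurable_const).exp)
      have hmtl : Measurable (tI τ (t+1)) := htIm0 (t+1) (by omega)
      have hmtlF : Measurable[ℱ t] (tI τ (t+1)) := htIm (t+1) t (by omega) le_rfl
      have hmh : Measurable[ℱ t] (fun ω => g ω * tI τ (t+1) ω * Real.exp (R (t+1) ω - θ)) :=
        (hg.mul hmtlF).mul (((hRFm (t+1) t le_rfl).sub measurable_const).exp)
      have hmhm0 : Measurable (fun ω => g ω * tI τ (t+1) ω * Real.exp (R (t+1) ω - θ)) :=
        hmh.mono (ℱ.le t) le_rfl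
      have habs_h : ∀ ω, |g ω * tI τ (t+1) ω * Real.exp (R (t+1) ω - θ)| ≤ E := by
        intro ω
        rw [abs_mul, abs_of_nonneg (Real.exp_pos _).le]
        calc |g ω * tI τ (t+1) ω| * Real.exp (R (t+1) ω - θ) ≤ 1 * E :=
              mul_le_mul (hbd _ _ _ habs_g habs_tl ω) (hexpRb (t+1) ω (by omega))
                (Real.exp_pos _).le zero_le_one
          _ = E := one_mul E
      have hbdE : ∀ (f1 f2 : Ω → ℝ), (∀ ω, |f1 ω| ≤ E) → (∀ ω, |f2 ω| ≤ 1) →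
          ∀ ω, |f1 ω * f2 ω| ≤ E := by
        intro f1 f2 h1 h2 ω
        rw [abs_mul]
        calc |f1 ω| * |f2 ω| ≤ E * 1 :=
              mul_le_mul (h1 ω) (h2 ω) (abs_nonneg _) (by linarith [hE1])
          _ = E := mul_one E
      -- integrability
      have habs_db : ∀ (u : ℕ) ω, u ≤ T + 1 →
          |dI T q τ u ω + (1 - Real.exp (R u ω - θ)) * bI τ ω| ≤ 2 + E := by
        intro u ω hu
        have h1 := h01abs _ (hd01 u ω)
        have h2 : |(1 - Real.exp (R u ω - θ)) * bI τ ω| ≤ 1 + E := by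
          rw [abs_mul]
          calc |1 - Real.exp (R u ω - θ)| * |bI τ ω| ≤ (1 + E) * 1 :=
                mul_le_mul (hFabs u ω hu) (h01abs _ (hb01 ω)) (abs_nonneg _) (by linarith [hE1])
            _ = 1 + E := mul_one _
        calc |dI T q τ u ω + (1 - Real.exp (R u ω - θ)) * bI τ ω|
            ≤ |dI T q τ u ω| + |(1 - Real.exp (R u ω - θ)) * bI τ ω| := abs_add_le _ _
          _ ≤ 1 + (1 + E) := add_le_add h1 h2
          _ = 2 + E := by ring
      have IntA : Integrable
          (fun ω => g ω * (dI T q τ t ω + (1 - Real.exp (R t ω - θ)) * bI τ ω)) μ :=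
        hInt _ (2 + E) (hgem.mul ((hdIm t).add (hmF0.mul hbIm)))
          (hbd _ _ _ habs_g (fun ω => habs_db t ω (by omega)))
      have IntB : Integrable (fun ω => g ω * (tI τ (t+1) ω * q (t+1) ω)) μ :=
        hInt _ 1 (hgem.mul (hmtl.mul (hqm (t+1))))
          (hbd _ _ _ habs_g (hbd _ _ _ habs_tl (fun ω => h01abs _ (hq01 (t+1) ω))))
      have IntC : Integrable (fun ω => (g ω * (1 - q (t+1) ω)) *
          (dI T q τ (t+1) ω + (1 - Real.exp (R (t+1) ω - θ)) * bI τ ω)) μ :=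
        hInt _ (2 + E) ((hgem.mul (measurable_const.sub (hqm (t+1)))).mul
            ((hdIm (t+1)).add (hmF1.mul hbIm)))
          (hbd _ _ _ habs_g' (fun ω => habs_db (t+1) ω (by omega)))
      have IntD : Integrable (fun ω => (g ω * (1 - q (t+1) ω)) *
          max 0 (1 - Real.exp (R (t+1) ω - θ))) μ :=
        hInt _ (1 + E) ((hgem.mul (measurable_const.sub (hqm (t+1)))).mul
            (measurable_const.max hmF1))
          (hbd _ _ _ habs_g' (fun ω => hmaxabs (t+1) ω (by omega)))
      have IntE : Integrable (fun ω => (g ω * (1 - q (t+1) ω)) *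
          (tI τ (t+1) ω * (1 - Real.exp (R (t+1) ω - θ)))) μ :=
        hInt _ (1 + E) ((hgem.mul (measurable_const.sub (hqm (t+1)))).mul (hmtl.mul hmF1))
          (hbd _ _ _ habs_g' (hbd _ _ _ habs_tl (fun ω => hFabs (t+1) ω (by omega))))
      have IntGT : Integrable (fun ω => g ω * tI τ (t+1) ω) μ :=
        hInt _ 1 (hgem.mul hmtl) (hbd _ _ _ habs_g habs_tl)
      have Intgte : Integrable (fun ω => g ω * tI τ (t+1) ω * Real.exp (R t ω - θ)) μ :=
        hInt _ E ((hgem.mul hmtl).mul (((hRm t).sub measurable_const).exp))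
          (fun ω => by
            rw [abs_mul, abs_of_nonneg (Real.exp_pos _).le]
            calc |g ω * tI τ (t+1) ω| * Real.exp (R t ω - θ) ≤ 1 * E :=
                  mul_le_mul (hbd _ _ _ habs_g habs_tl ω) (hexpRb t ω (by omega))
                    (Real.exp_pos _).le zero_le_one
              _ = E := one_mul E)
      have Inth : Integrable (fun ω => g ω * tI τ (t+1) ω * Real.exp (R (t+1) ω - θ)) μ :=
        hInt _ E hmhm0 habs_h
      have Inthq : Integrable
          (fun ω => g ω * tI τ (t+1) ω * Real.exp (R (t+1) ω - θ) * q (t+1) ω) μ :=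
        hInt _ E (hmhm0.mul (hqm (t+1))) (hbdE _ _ habs_h (fun ω => h01abs _ (hq01 (t+1) ω)))
      have Inthr : Integrable
          (fun ω => g ω * tI τ (t+1) ω * Real.exp (R (t+1) ω - θ) * r (t+1) ω) μ :=
        hInt _ E (hmhm0.mul (hrm (t+1) (by omega)))
          (hbdE _ _ habs_h (fun ω => abs_le.2 ⟨by linarith [hr0 (t+1) ω], hr1 (t+1) ω⟩))
      have Inth1q : Integrable
          (fun ω => g ω * tI τ (t+1) ω * Real.exp (R (t+1) ω - θ) * (1 - q (t+1) ω)) μ :=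
        hInt _ E (hmhm0.mul (measurable_const.sub (hqm (t+1)))) (hbdE _ _ habs_h habs_1q)
      -- step 1 & 2 : LHS = ∫ g·tl - ∫ g·tl·exp(R t - θ)
      have hA : ∫ ω, g ω * max 0 (1 - Real.exp (R t ω - θ)) ∂μ
          = ∫ ω, g ω * tI τ (t+1) ω ∂μ
            - ∫ ω, g ω * tI τ (t+1) ω * Real.exp (R t ω - θ) ∂μ := by
        have e1 : ∫ ω, g ω * max 0 (1 - Real.exp (R t ω - θ)) ∂μ
            = ∫ ω, g ω * tI τ (t+1) ω - g ω * tI τ (t+1) ω * Real.exp (R t ω - θ) ∂μ := by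
          refine integral_congr_ae (Filter.Eventually.of_forall fun ω => ?_)
          have hmax : max 0 (1 - Real.exp (R t ω - θ))
              = tI τ (t+1) ω * (1 - Real.exp (R t ω - θ)) := by
            unfold tI
            split
            · next hsp =>
              rw [one_mul]
              have hRt : R t ω < θ := (htleR t ω (by omega)).1 hsp
              have : Real.exp (R t ω - θ) < 1 := Real.exp_lt_one_iff.2 (by linarith)
              exact max_eq_right (by linarith)
            · next hsp =>
              rw [zero_mul]
              have hRt : θ ≤ R t ω :=
                le_of_not_gt (fun hc => hsp ((htleR t ω (by omega)).2 hc))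
              have : (1:ℝ) ≤ Real.exp (R t ω - θ) := by
                have := Real.exp_le_exp.2 (show (0:ℝ) ≤ R t ω - θ by linarith)
                rwa [Real.exp_zero] at this
              exact max_eq_left (by linarith)
          simp only []
          rw [hmax]; ring
        rw [e1, integral_sub IntGT Intgte]
      -- step 3 : ∫ h·(1-q) ≤ ∫ g·tl·exp(R t - θ)
      have h3 : ∫ ω, g ω * tI τ (t+1) ω * Real.exp (R (t+1) ω - θ) * (1 - q (t+1) ω) ∂μ
          ≤ ∫ ω, g ω * tI τ (t+1) ω * Real.exp (R t ω - θ) ∂μ := by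
        have e_b : ∫ ω, (g ω * tI τ (t+1) ω * Real.exp (R (t+1) ω - θ)) * r (t+1) ω ∂μ
            ≤ ∫ ω, (g ω * tI τ (t+1) ω * Real.exp (R (t+1) ω - θ)) * q (t+1) ω ∂μ := by
          refine hq_ge_r (t+1) (by omega) (by omega) _ hmh
            (fun ω => mul_nonneg (mul_nonneg (hg0 ω) (htl0 ω)) (Real.exp_pos _).le)
            (fun ω => le_trans (le_abs_self _) (habs_h ω)) 
        have e_a : (fun ω => g ω * tI τ (t+1) ω * Real.exp (R (t+1) ω - θ) * (1 - q (t+1) ω))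
            = fun ω => g ω * tI τ (t+1) ω * Real.exp (R (t+1) ω - θ)
              - g ω * tI τ (t+1) ω * Real.exp (R (t+1) ω - θ) * q (t+1) ω := by
          funext ω; ring
        have e_c : (fun ω => g ω * tI τ (t+1) ω * Real.exp (R (t+1) ω - θ) * (1 - r (t+1) ω))
            = fun ω => g ω * tI τ (t+1) ω * Real.exp (R (t+1) ω - θ)
              - g ω * tI τ (t+1) ω * Real.exp (R (t+1) ω - θ) * r (t+1) ω := by
          funext ω; ring
        have e_d : ∫ ω, g ω * tI τ (t+1) ω * Real.exp (R (t+1) ω - θ) * (1 - r (t+1) ω) ∂μ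
            ≤ ∫ ω, g ω * tI τ (t+1) ω * Real.exp (R t ω - θ) ∂μ := by
          refine integral_mono (by rw [e_c]; exact Inth.sub Inthr) Intgte (fun ω => ?_)
          have key : Real.exp (R (t+1) ω - θ) * (1 - r (t+1) ω) ≤ Real.exp (R t ω - θ) := by
            rw [hRsucc t ω]
            have h1 : Real.exp (R t ω + r (t+1) ω - θ)
                = Real.exp (R t ω - θ) * Real.exp (r (t+1) ω) := by
              rw [← Real.exp_add]; ring_nf
            rw [h1]
            have h2 := hexp1 (r (t+1) ω)
            nlinarith [Real.exp_pos (R t ω - θ), Real.exp_pos (r (t+1) ω)]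
          have hre : g ω * tI τ (t+1) ω * Real.exp (R (t+1) ω - θ) * (1 - r (t+1) ω)
              = g ω * tI τ (t+1) ω * (Real.exp (R (t+1) ω - θ) * (1 - r (t+1) ω)) := by ring
          rw [hre, show g ω * tI τ (t+1) ω * Real.exp (R t ω - θ)
              = g ω * tI τ (t+1) ω * (Real.exp (R t ω - θ)) from rfl]
          exact mul_le_mul_of_nonneg_left key (mul_nonneg (hg0 ω) (htl0 ω))
        have s1 : ∫ ω, g ω * tI τ (t+1) ω * Real.exp (R (t+1) ω - θ) * (1 - q (t+1) ω) ∂μ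
            = ∫ ω, g ω * tI τ (t+1) ω * Real.exp (R (t+1) ω - θ) ∂μ
              - ∫ ω, g ω * tI τ (t+1) ω * Real.exp (R (t+1) ω - θ) * q (t+1) ω ∂μ := by
          rw [e_a, integral_sub Inth Inthq]
        have s2 : ∫ ω, g ω * tI τ (t+1) ω * Real.exp (R (t+1) ω - θ) * (1 - r (t+1) ω) ∂μ
            = ∫ ω, g ω * tI τ (t+1) ω * Real.exp (R (t+1) ω - θ) ∂μ
              - ∫ ω, g ω * tI τ (t+1) ω * Real.exp (R (t+1) ω - θ) * r (t+1) ω ∂μ := by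
          rw [e_c, integral_sub Inth Inthr]
        linarith [e_b, e_d, s1, s2]
      -- step 4
      have h4 : ∫ ω, g ω * (tI τ (t+1) ω * q (t+1) ω) ∂μ
          + ∫ ω, (g ω * (1 - q (t+1) ω)) * (tI τ (t+1) ω * (1 - Real.exp (R (t+1) ω - θ))) ∂μ
          = ∫ ω, g ω * tI τ (t+1) ω ∂μ
            - ∫ ω, g ω * tI τ (t+1) ω * Real.exp (R (t+1) ω - θ) * (1 - q (t+1) ω) ∂μ := by
        rw [← integral_add IntB IntE]
        have hfe : (fun ω => g ω * (tI τ (t+1) ω * q (t+1) ω)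
              + (g ω * (1 - q (t+1) ω)) * (tI τ (t+1) ω * (1 - Real.exp (R (t+1) ω - θ))))
            = fun ω => g ω * tI τ (t+1) ω
              - g ω * tI τ (t+1) ω * Real.exp (R (t+1) ω - θ) * (1 - q (t+1) ω) := by
          funext ω; ring
        rw [hfe, integral_sub IntGT Inth1q]
      -- step 6
      have h6 : ∫ ω, (g ω * (1 - q (t+1) ω)) *
            (tI τ (t+1) ω * (1 - Real.exp (R (t+1) ω - θ))) ∂μ
          ≤ ∫ ω, (g ω * (1 - q (t+1) ω)) * max 0 (1 - Real.exp (R (t+1) ω - θ)) ∂μ := by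
        refine integral_mono IntE IntD (fun ω => ?_)
        refine mul_le_mul_of_nonneg_left ?_ (hg' ω)
        unfold tI
        split
        · rw [one_mul]; exact le_max_right _ _
        · rw [zero_mul]; exact le_max_left _ _
      -- induction hypothesis
      have ihap := ih (t+1) (by omega) (fun ω => g ω * (1 - q (t+1) ω))
        (hgT.mul (measurable_const.sub (hqadapt (t+1)))) hg' hg'1
      -- step 5
      have h5 : ∫ ω, g ω * (tI τ (t+1) ω * q (t+1) ω) ∂μ
          + ∫ ω, (g ω * (1 - q (t+1) ω)) *
              (dI T q τ (t+1) ω + (1 - Real.exp (R (t+1) ω - θ)) * bI τ ω) ∂μ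
          ≤ ∫ ω, g ω * (dI T q τ t ω + (1 - Real.exp (R t ω - θ)) * bI τ ω) ∂μ := by
        rw [← integral_add IntB IntC]
        refine integral_mono (IntB.add IntC) IntA (fun ω => ?_)
        have hF0b : 0 ≤ (1 - Real.exp (R t ω - θ)) * bI τ ω := by
          unfold bI
          split
          · next hc => rw [mul_one]; exact hFpos t ω (by omega) hc
          · rw [mul_zero]
        have hd0nn : 0 ≤ dI T q τ t ω := by
          rcases hd01 t ω with h | h <;> rw [h] <;> norm_num
        rcases hq01 (t+1) ω with hq | hq
        · rw [hq]
          simp only [mul_zero, sub_zero, mul_one, zero_add]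
          refine mul_le_mul_of_nonneg_left ?_ (hg0 ω)
          have hd : dI T q τ (t+1) ω ≤ dI T q τ t ω := by
            unfold dI
            split
            · next hex =>
              obtain ⟨s, h1, h2, h3, h4⟩ := hex
              rw [if_pos ⟨s, by omega, h2, h3, h4⟩]
            · split <;> norm_num
          have hFb : (1 - Real.exp (R (t+1) ω - θ)) * bI τ ω
              ≤ (1 - Real.exp (R t ω - θ)) * bI τ ω := by
            refine mul_le_mul_of_nonneg_right ?_ (by
              rcases hb01 ω with h | h <;> rw [h] <;> norm_num)
            have := hRmono ω (Nat.le_succ t)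
            have := Real.exp_le_exp.2 (sub_le_sub_right this θ)
            linarith
          exact add_le_add hd hFb
        · rw [hq]
          simp only [sub_self, mul_zero, zero_mul, add_zero, mul_one]
          unfold tI
          split
          · next hle =>
            rw [mul_one]
            have hd : dI T q τ t ω = 1 := by
              unfold dI
              exact if_pos ⟨t+1, le_rfl, hT1, hle, hq⟩
            calc g ω = g ω * 1 := (mul_one _).symm
              _ ≤ g ω * (dI T q τ t ω + (1 - Real.exp (R t ω - θ)) * bI τ ω) := by
                  refine mul_le_mul_of_nonneg_left ?_ (hg0 ω)
                  rw [hd]; linarith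
          · rw [mul_zero]
            exact mul_nonneg (hg0 ω) (add_nonneg hd0nn hF0b)
      linarith [hA, h3, h4, h6, ihap, h5]

  -- final assembly
  have H := key T 0 (by omega) (fun _ => 1) measurable_const (fun ω => zero_le_one)
    (fun ω => le_rfl)
  have hexplt : Real.exp (-θ) < 1 := Real.exp_lt_one_iff.2 (by linarith)
  have e1 : ∫ ω, (1:ℝ) * max 0 (1 - Real.exp (R 0 ω - θ)) ∂μ = 1 - Real.exp (-θ) := by
    have : (fun ω => (1:ℝ) * max 0 (1 - Real.exp (R 0 ω - θ)))
        = fun _ => 1 - Real.exp (-θ) := by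
      funext ω
      rw [hR0 ω, zero_sub, one_mul]
      exact max_eq_right (by linarith)
    rw [this]
    simp [measure_univ]
  have e2 : ∫ ω, (1:ℝ) * (dI T q τ 0 ω + (1 - Real.exp (R 0 ω - θ)) * bI τ ω) ∂μ
      = ∫ ω, dI T q τ 0 ω ∂μ + (1 - Real.exp (-θ)) * ∫ ω, bI τ ω ∂μ := by
    have hre : (fun ω => (1:ℝ) * (dI T q τ 0 ω + (1 - Real.exp (R 0 ω - θ)) * bI τ ω))
        = fun ω => dI T q τ 0 ω + (1 - Real.exp (-θ)) * bI τ ω := by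
      funext ω; rw [hR0 ω, zero_sub, one_mul]
    rw [hre, integral_add (hInt _ 1 (hdIm 0) (fun ω => h01abs _ (hd01 0 ω)))
      ((hInt _ 1 hbIm (fun ω => h01abs _ (hb01 ω))).const_mul _), integral_const_mul]
  have hAind : (fun ω => dI T q τ 0 ω) = Set.indicator
      {ω | ∃ t : ℕ, 1 ≤ t ∧ t ≤ T ∧ (t : ℕ∞) ≤ τ ω ∧ q t ω = 1} (fun _ => (1:ℝ)) := by
    funext ω
    rw [Set.indicator_apply]
    unfold dI
    refine if_congr ?_ rfl rfl
    constructor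
    · rintro ⟨s, h1, h2, h3, h4⟩; exact ⟨s, by omega, h2, h3, h4⟩
    · rintro ⟨s, h1, h2, h3, h4⟩; exact ⟨s, by omega, h2, h3, h4⟩
  have hAset : MeasurableSet {ω | ∃ t : ℕ, 1 ≤ t ∧ t ≤ T ∧ (t : ℕ∞) ≤ τ ω ∧ q t ω = 1} := by
    have : {ω | ∃ t : ℕ, 1 ≤ t ∧ t ≤ T ∧ (t : ℕ∞) ≤ τ ω ∧ q t ω = 1}
        = {ω | ∃ s : ℕ, 0 + 1 ≤ s ∧ s ≤ T ∧ (s : ℕ∞) ≤ τ ω ∧ q s ω = 1} := by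
      norm_num
    rw [this]; exact hdSet 0
  have eA : ∫ ω, dI T q τ 0 ω ∂μ
      = (μ {ω | ∃ t : ℕ, 1 ≤ t ∧ t ≤ T ∧ (t : ℕ∞) ≤ τ ω ∧ q t ω = 1}).toReal := by
    rw [hAind]
    exact integral_indicator_one hAset
  have hBind : (fun ω => bI τ ω) = Set.indicator {ω | τ ω = ⊤} (fun _ => (1:ℝ)) := by
    funext ω; rw [Set.indicator_apply]; rfl
  have eB : ∫ ω, bI τ ω ∂μ = (μ {ω | τ ω = ⊤}).toReal := by
    rw [hBind]; exact integral_indicator_one hbSet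
  have hmeasB : MeasurableSet {ω | τ ω ≠ ⊤} := hbSet.compl
  have hcompl : {ω | τ ω = ⊤} = {ω | τ ω ≠ ⊤}ᶜ := by ext ω; simp
  have hsum : (μ {ω | τ ω ≠ ⊤}).toReal + (μ {ω | τ ω = ⊤}).toReal = 1 := by
    rw [hcompl, ← ENNReal.toReal_add (measure_ne_top μ _) (measure_ne_top μ _),
      measure_add_measure_compl hmeasB, measure_univ, ENNReal.toReal_one]
  rw [e1, e2, eA, eB] at H
  set c : ℝ := 1 - Real.exp (-θ) with hc
  set x : ℝ := (μ {ω | τ ω ≠ ⊤}).toReal with hx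
  set y : ℝ := (μ {ω | τ ω = ⊤}).toReal with hy
  have hxy : c * y = c - c * x := by
    have : y = 1 - x := by linarith
    rw [this]; ring
  linarith
end

section
/- Let q_t ∈ {0,1} and r_t ∈ [0,1] be adapted processes with r_t being F_{t-1}-measurable and P(q_t = 1 | F_{t-1}) ≥ r_t. Let τ be the first time t such that either R_t = ∑_{s≤t} r_s ≥ 1 or q_t = 1 (or ∞ if neither occurs by time T, in which case τ is truncated at T). Then P(∑_{t=1}^{τ} q_t ≥ 1) ≥ E[1 - e^{-R_τ}]. -/
open MeasureTheory

/-- Selection measurability: composing a measurable, bounded ℕ-valued map with a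
family of measurable functions is measurable. -/
lemma aux_sel_measurable {Ω : Type*} [MeasurableSpace Ω] (σ : Ω → ℕ) (hσ : Measurable σ)
    (T : ℕ) (hbd : ∀ ω, σ ω ≤ T) (g : ℕ → Ω → ℝ) (hg : ∀ k, Measurable (g k)) :
    Measurable fun ω => g (σ ω) ω := by
  have heq : (fun ω => g (σ ω) ω)
      = fun ω => ∑ k ∈ Finset.range (T + 1), Set.indicator (σ ⁻¹' {k}) (g k) ω := by
    funext ω
    rw [Finset.sum_eq_single (σ ω)]
    · simp [Set.indicator]
    · intro k _ hk
      have : ω ∉ σ ⁻¹' {k} := by simp [Ne.symm hk]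
      simp [Set.indicator_of_notMem this]
    · intro h
      exact absurd (Finset.mem_range.mpr (Nat.lt_succ_of_le (hbd ω))) h
  rw [heq]
  exact Finset.measurable_sum _ fun k _ => (hg k).indicator (hσ (measurableSet_singleton k))

/-- Elementary inequality: `e^{-a} - e^{-(a+b)} ≤ b` for `a, b ≥ 0`. -/
lemma aux_exp_diff_le {a b : ℝ} (ha : 0 ≤ a) (hb : 0 ≤ b) :
    Real.exp (-a) - Real.exp (-(a + b)) ≤ b := by
  have h1 : Real.exp (-(a + b)) = Real.exp (-a) * Real.exp (-b) := by
    rw [← Real.exp_add]; ring_nf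
  have h2 : Real.exp (-a) ≤ 1 := Real.exp_le_one_iff.mpr (by linarith)
  have h3 : 1 - b ≤ Real.exp (-b) := by linarith [Real.add_one_le_exp (-b)]
  have h4 : 0 < Real.exp (-a) := Real.exp_pos _
  have h5 : Real.exp (-b) ≤ 1 := Real.exp_le_one_iff.mpr (by linarith)
  nlinarith

/-- Strong auxiliary lemma: if `q_t ∈ {0,1}` has conditional success probability at least
the `F_{t-1}`-measurable `r_t ∈ [0,1]`, and `τ` is the first time `t` with
`R_t = ∑_{s≤t} r_s ≥ 1` or `q_t = 1` (truncated at `T`), then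
`P(∑_{t=1}^{τ} q_t ≥ 1) ≥ E[1 - e^{-R_τ}]`. -/
theorem strong_auxiliary_stopping_lower_bound
    {Ω : Type*} {m0 : MeasurableSpace Ω} (μ : Measure Ω) [IsProbabilityMeasure μ]
    (ℱ : Filtration ℕ m0) (T : ℕ)
    (q r : ℕ → Ω → ℝ)
    (hq01 : ∀ t ω, q t ω = 0 ∨ q t ω = 1)
    (hr01 : ∀ t ω, r t ω ∈ Set.Icc (0:ℝ) 1)
    (hqadapt : ∀ t, Measurable[ℱ t] (q t))
    (hradapt : ∀ t, 1 ≤ t → Measurable[ℱ (t - 1)] (r t))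
    (hcond : ∀ t, 1 ≤ t → t ≤ T → ∀ᵐ ω ∂μ, r t ω ≤ (μ[q t | ℱ (t - 1)]) ω)
    (R : ℕ → Ω → ℝ) (hR : ∀ t ω, R t ω = ∑ s ∈ Finset.Icc 1 t, r s ω)
    (τ : Ω → ℕ)
    (hτ : ∀ ω, τ ω = sInf ({t : ℕ | 1 ≤ t ∧ t ≤ T ∧ (1 ≤ R t ω ∨ q t ω = 1)} ∪ {T})) :
    (μ {ω | ∃ t : ℕ, 1 ≤ t ∧ t ≤ τ ω ∧ q t ω = 1}).toReal ≥
      ∫ ω, (1 - Real.exp (-(R (τ ω) ω))) ∂μ := by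
  classical
  -- basic measurability
  have hq_meas : ∀ s, Measurable (q s) := fun s => (hqadapt s).mono (ℱ.le s) le_rfl
  have hr_meas : ∀ s, 1 ≤ s → Measurable (r s) := fun s hs =>
    (hradapt s hs).mono (ℱ.le _) le_rfl
  have hR_meas : ∀ t, Measurable (R t) := by
    intro t
    have h : R t = fun ω => ∑ s ∈ Finset.Icc 1 t, r s ω := funext fun ω => hR t ω
    rw [h]
    exact Finset.measurable_sum _ fun s hs => hr_meas s (Finset.mem_Icc.mp hs).1
  have hR_adapt : ∀ s n, s ≤ n → Measurable[ℱ n] (R s) := by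
    intro s n hsn
    have h : R s = fun ω => ∑ j ∈ Finset.Icc 1 s, r j ω := funext fun ω => hR s ω
    rw [h]
    refine Finset.measurable_sum _ fun j hj => ?_
    obtain ⟨h1, h2⟩ := Finset.mem_Icc.mp hj
    exact (hradapt j h1).mono (ℱ.mono (le_trans (Nat.sub_le j 1) (le_trans h2 hsn))) le_rfl
  have hR_nonneg : ∀ t ω, 0 ≤ R t ω := fun t ω => by
    rw [hR]; exact Finset.sum_nonneg fun s _ => (hr01 s ω).1
  have hR_succ : ∀ t ω, R (t + 1) ω = R t ω + r (t + 1) ω := fun t ω => by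
    rw [hR, hR, Finset.sum_Icc_succ_top (by omega : 1 ≤ t + 1)]
  -- no-success indicator
  set G : ℕ → Ω → ℝ := fun t ω => ∏ s ∈ Finset.Icc 1 t, (1 - q s ω) with hGdef
  have hG01 : ∀ t ω, G t ω = 0 ∨ G t ω = 1 := by
    intro t ω
    refine Finset.prod_induction _ (fun x => x = 0 ∨ x = 1) ?_ (Or.inr rfl) ?_
    · rintro a b (rfl | rfl) (rfl | rfl) <;> simp
    · intro s _
      rcases hq01 s ω with h | h <;> simp [h]
  have hG_meas : ∀ t, Measurable (G t) := fun t =>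
    Finset.measurable_prod _ fun s hs =>
      measurable_const.sub ((hq_meas s))
  have hG_succ : ∀ t ω, G (t + 1) ω = G t ω * (1 - q (t + 1) ω) := fun t ω => by
    simp only [hGdef]
    rw [Finset.prod_Icc_succ_top (by omega : 1 ≤ t + 1)]
  have hG_one : ∀ t ω, (∀ s, 1 ≤ s → s ≤ t → q s ω = 0) → G t ω = 1 := by
    intro t ω h
    refine Finset.prod_eq_one fun s hs => ?_
    obtain ⟨h1, h2⟩ := Finset.mem_Icc.mp hs
    rw [h s h1 h2]; ring
  -- facts about τ
  have hτT : ∀ ω, τ ω ≤ T := fun ω => by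
    rw [hτ]; exact Nat.sInf_le (Or.inr rfl)
  have hτ_char : ∀ t, t < T → ∀ ω,
      (t < τ ω ↔ ∀ s, 1 ≤ s → s ≤ t → ¬(1 ≤ R s ω ∨ q s ω = 1)) := by
    intro t ht ω
    constructor
    · intro hlt s h1 h2 hcnd
      have hmem : s ∈ ({t : ℕ | 1 ≤ t ∧ t ≤ T ∧ (1 ≤ R t ω ∨ q t ω = 1)} ∪ {T} : Set ℕ) :=
        Or.inl ⟨h1, le_trans h2 (le_of_lt ht), hcnd⟩
      have hle := Nat.sInf_le hmem
      rw [← hτ ω] at hle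
      omega
    · intro hall
      by_contra hle
      push_neg at hle
      have hmem := Nat.sInf_mem (⟨T, Or.inr rfl⟩ :
        ({t : ℕ | 1 ≤ t ∧ t ≤ T ∧ (1 ≤ R t ω ∨ q t ω = 1)} ∪ {T} : Set ℕ).Nonempty)
      rw [← hτ ω] at hmem
      rcases hmem with ⟨h1, _, hc⟩ | hT
      · exact hall _ h1 hle hc
      · simp only [Set.mem_singleton_iff] at hT
        omega
  have hA_meas : ∀ t, t < T → MeasurableSet[ℱ t] {ω | t < τ ω} := by
    intro t ht
    have hset : {ω | t < τ ω}
        = ⋂ s ∈ Finset.Icc 1 t, ({ω | R s ω < 1} ∩ {ω | q s ω ≠ 1}) := by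
      ext ω
      simp only [Set.mem_setOf_eq, hτ_char t ht ω, Set.mem_iInter, Finset.mem_Icc,
        Set.mem_inter_iff, not_or, not_le]
      constructor
      · intro h s hs
        exact h s hs.1 hs.2
      · intro h s h1 h2
        exact h s ⟨h1, h2⟩
    rw [hset]
    refine MeasurableSet.biInter (Finset.Icc 1 t).countable_toSet fun s hs => ?_
    obtain ⟨h1, h2⟩ := Finset.mem_Icc.mp hs
    refine MeasurableSet.inter ?_ ?_
    · exact (hR_adapt s t h2) measurableSet_Iio
    · exact (((hqadapt s).mono (ℱ.mono h2) le_rfl) (measurableSet_singleton 1)).compl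
  have hτle_meas : ∀ n, MeasurableSet {ω | τ ω ≤ n} := by
    intro n
    rcases lt_or_ge n T with h | h
    · have h1 : {ω | τ ω ≤ n} = {ω | n < τ ω}ᶜ := by
        ext ω; simp [not_lt]
      rw [h1]
      exact ((ℱ.le n) _ (hA_meas n h)).compl
    · have h1 : {ω | τ ω ≤ n} = Set.univ := by
        ext ω; simp only [Set.mem_setOf_eq, Set.mem_univ, iff_true]
        exact le_trans (hτT ω) h
      rw [h1]; exact MeasurableSet.univ
  have hτ_meas : Measurable τ := by
    apply measurable_to_countable'
    intro k
    cases k with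
    | zero =>
      have h1 : τ ⁻¹' {0} = {ω | τ ω ≤ 0} := by ext ω; simp [Nat.le_zero]
      rw [h1]; exact hτle_meas 0
    | succ k =>
      have h1 : τ ⁻¹' {k + 1} = {ω | τ ω ≤ k + 1} \ {ω | τ ω ≤ k} := by
        ext ω
        simp only [Set.mem_preimage, Set.mem_singleton_iff, Set.mem_diff, Set.mem_setOf_eq]
        omega
      rw [h1]; exact (hτle_meas (k + 1)).diff (hτle_meas k)
  -- the supermartingale-like process
  set g : ℕ → Ω → ℝ := fun k ω => G k ω + (1 - Real.exp (-(R k ω))) with hgdef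
  set F : ℕ → Ω → ℝ := fun t ω => g (min t (τ ω)) ω with hFdef
  have hg_meas : ∀ k, Measurable (g k) := fun k =>
    (hG_meas k).add (measurable_const.sub ((hR_meas k).neg.exp))
  have hg_bounds : ∀ k ω, 0 ≤ g k ω ∧ g k ω ≤ 2 := by
    intro k ω
    have h1 : 0 ≤ G k ω ∧ G k ω ≤ 1 := by
      rcases hG01 k ω with h | h <;> simp [h]
    have h2 : Real.exp (-(R k ω)) ≤ 1 :=
      Real.exp_le_one_iff.mpr (by linarith [hR_nonneg k ω])
    have h3 : 0 < Real.exp (-(R k ω)) := Real.exp_pos _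
    constructor <;> simp only [hgdef] <;> nlinarith
  have hF_meas : ∀ t, Measurable (F t) := by
    intro t
    refine aux_sel_measurable (fun ω => min t (τ ω)) ?_ T ?_ g hg_meas
    · exact measurable_const.min hτ_meas
    · intro ω; exact le_trans (min_le_right _ _) (hτT ω)
  have hbdd_int : ∀ f : Ω → ℝ, Measurable f → (∀ ω, |f ω| ≤ 2) → Integrable f μ := by
    intro f hf hb
    exact (integrable_const 2).mono' hf.aestronglyMeasurable
      (Filter.Eventually.of_forall fun ω => by rw [Real.norm_eq_abs]; exact hb ω)
  have hF_int : ∀ t, Integrable (F t) μ := by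
    intro t
    refine hbdd_int _ (hF_meas t) fun ω => ?_
    have := hg_bounds (min t (τ ω)) ω
    rw [abs_le]; constructor <;> simp only [hFdef] <;> linarith [this.1, this.2]
  -- main induction
  have key : ∀ t, t ≤ T → ∫ ω, F t ω ∂μ ≤ 1 := by
    intro t
    induction t with
    | zero =>
      intro _
      have hF0 : F 0 = fun _ => (1 : ℝ) := by
        funext ω
        have h0 : min 0 (τ ω) = 0 := Nat.zero_min _
        have hG0 : G 0 ω = 1 := by simp [hGdef]
        have hR0 : R 0 ω = 0 := by rw [hR]; simp
        simp [hFdef, hgdef, h0, hG0, hR0]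
      rw [hF0]
      simp
    | succ t ih =>
      intro hts
      have htT : t < T := hts
      have ihv := ih (le_of_lt htT)
      set A : Set Ω := {ω | t < τ ω} with hAdef
      have hA0 : MeasurableSet A := (ℱ.le t) _ (hA_meas t htT)
      -- on the complement the process is frozen
      have hcompl : Set.EqOn (F (t + 1)) (F t) Aᶜ := by
        intro ω hω
        simp only [hAdef, Set.mem_compl_iff, Set.mem_setOf_eq, not_lt] at hω
        have h1 : min (t + 1) (τ ω) = τ ω := min_eq_right (by omega)
        have h2 : min t (τ ω) = τ ω := min_eq_right hω
        simp only [hFdef, h1, h2]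
      -- on A, explicit formulas
      have honA : ∀ ω ∈ A, F (t + 1) ω = 2 - q (t + 1) ω - Real.exp (-(R (t + 1) ω))
          ∧ F t ω = 2 - Real.exp (-(R t ω)) := by
        intro ω hω
        simp only [hAdef, Set.mem_setOf_eq] at hω
        have h1 : min (t + 1) (τ ω) = t + 1 := min_eq_left (by omega)
        have h2 : min t (τ ω) = t := min_eq_left (le_of_lt hω)
        have hnos : ∀ s, 1 ≤ s → s ≤ t → q s ω = 0 := by
          intro s hs1 hs2
          have h := (hτ_char t htT ω).mp hω s hs1 hs2
          push_neg at h
          rcases hq01 s ω with h' | h'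
          · exact h'
          · exact absurd h' h.2
        have hGt : G t ω = 1 := hG_one t ω hnos
        constructor
        · simp only [hFdef, h1, hgdef]
          rw [hG_succ, hGt]
          ring
        · simp only [hFdef, h2, hgdef]
          rw [hGt]
          ring
      -- integrability pieces
      have hq_int : Integrable (q (t + 1)) μ := by
        refine hbdd_int _ (hq_meas (t + 1)) fun ω => ?_
        rcases hq01 (t + 1) ω with h | h <;> rw [h] <;> norm_num
      have hr_int : Integrable (r (t + 1)) μ := by
        refine hbdd_int _ (hr_meas (t + 1) (by omega)) fun ω => ?_
        have := hr01 (t + 1) ω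
        rw [abs_le]; constructor <;> linarith [this.1, this.2]
      have he_int : Integrable (fun ω => Real.exp (-(R t ω))) μ := by
        refine hbdd_int _ ((hR_meas t).neg.exp) fun ω => ?_
        have h1 : Real.exp (-(R t ω)) ≤ 1 :=
          Real.exp_le_one_iff.mpr (by linarith [hR_nonneg t ω])
        have h2 : 0 < Real.exp (-(R t ω)) := Real.exp_pos _
        rw [abs_le]; constructor <;> linarith
      have he'_int : Integrable (fun ω => Real.exp (-(R (t + 1) ω))) μ := by
        refine hbdd_int _ ((hR_meas (t + 1)).neg.exp) fun ω => ?_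
        have h1 : Real.exp (-(R (t + 1) ω)) ≤ 1 :=
          Real.exp_le_one_iff.mpr (by linarith [hR_nonneg (t + 1) ω])
        have h2 : 0 < Real.exp (-(R (t + 1) ω)) := Real.exp_pos _
        rw [abs_le]; constructor <;> linarith
      -- key inequality on A:  ∫_A (e^{-R_t} - e^{-R_{t+1}}) ≤ ∫_A q_{t+1}
      have hdiff_le_r : ∫ ω in A, (Real.exp (-(R t ω)) - Real.exp (-(R (t + 1) ω))) ∂μ
          ≤ ∫ ω in A, r (t + 1) ω ∂μ := by
        refine setIntegral_mono_on ((he_int.sub he'_int).integrableOn)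
          (hr_int.integrableOn) hA0 fun ω _ => ?_
        rw [hR_succ t ω]
        exact aux_exp_diff_le (hR_nonneg t ω) (hr01 (t + 1) ω).1
      have hr_le_ce : ∫ ω in A, r (t + 1) ω ∂μ
          ≤ ∫ ω in A, (μ[q (t + 1) | ℱ t]) ω ∂μ := by
        have hae := hcond (t + 1) (by omega) hts
        simp only [Nat.add_sub_cancel] at hae
        exact integral_mono_ae hr_int.integrableOn integrable_condExp.integrableOn
          (ae_restrict_of_ae hae)
      have hce_eq : ∫ ω in A, (μ[q (t + 1) | ℱ t]) ω ∂μ = ∫ ω in A, q (t + 1) ω ∂μ :=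
        setIntegral_condExp (ℱ.le t) hq_int (hA_meas t htT)
      have hmain : ∫ ω in A, (Real.exp (-(R t ω)) - Real.exp (-(R (t + 1) ω))) ∂μ
          ≤ ∫ ω in A, q (t + 1) ω ∂μ := by
        calc ∫ ω in A, (Real.exp (-(R t ω)) - Real.exp (-(R (t + 1) ω))) ∂μ
            ≤ ∫ ω in A, r (t + 1) ω ∂μ := hdiff_le_r
          _ ≤ ∫ ω in A, (μ[q (t + 1) | ℱ t]) ω ∂μ := hr_le_ce
          _ = ∫ ω in A, q (t + 1) ω ∂μ := hce_eq
      -- step inequality on A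
      have hstep : ∫ ω in A, F (t + 1) ω ∂μ ≤ ∫ ω in A, F t ω ∂μ := by
        have h1 : ∫ ω in A, F (t + 1) ω ∂μ
            = ∫ ω in A, (2 - q (t + 1) ω - Real.exp (-(R (t + 1) ω))) ∂μ :=
          setIntegral_congr_fun hA0 fun ω hω => (honA ω hω).1
        have h2 : ∫ ω in A, F t ω ∂μ
            = ∫ ω in A, (2 - Real.exp (-(R t ω))) ∂μ :=
          setIntegral_congr_fun hA0 fun ω hω => (honA ω hω).2
        rw [h1, h2]
        have hc2 : Integrable (fun _ : Ω => (2 : ℝ)) (μ.restrict A) :=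
          (integrable_const 2).integrableOn
        have hf2 : Integrable (fun ω => 2 - q (t + 1) ω) (μ.restrict A) :=
          hc2.sub hq_int.integrableOn
        have he'A : Integrable (fun ω => Real.exp (-(R (t + 1) ω))) (μ.restrict A) :=
          he'_int.integrableOn
        have heA : Integrable (fun ω => Real.exp (-(R t ω))) (μ.restrict A) :=
          he_int.integrableOn
        have hqA : Integrable (fun ω => q (t + 1) ω) (μ.restrict A) :=
          hq_int.integrableOn
        have e1 : ∫ ω in A, (2 - q (t + 1) ω - Real.exp (-(R (t + 1) ω))) ∂μ
            = (∫ ω in A, (2 : ℝ) ∂μ) - ∫ ω in A, q (t + 1) ω ∂μ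
              - ∫ ω in A, Real.exp (-(R (t + 1) ω)) ∂μ := by
          rw [integral_sub hf2 he'A, integral_sub hc2 hqA]
        have e2 : ∫ ω in A, (2 - Real.exp (-(R t ω))) ∂μ
            = (∫ ω in A, (2 : ℝ) ∂μ) - ∫ ω in A, Real.exp (-(R t ω)) ∂μ := by
          rw [integral_sub hc2 heA]
        have e3 : ∫ ω in A, (Real.exp (-(R t ω)) - Real.exp (-(R (t + 1) ω))) ∂μ
            = (∫ ω in A, Real.exp (-(R t ω)) ∂μ)
              - ∫ ω in A, Real.exp (-(R (t + 1) ω)) ∂μ :=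
          integral_sub heA he'A
        rw [e1, e2]
        rw [e3] at hmain
        linarith
      calc ∫ ω, F (t + 1) ω ∂μ
          = (∫ ω in A, F (t + 1) ω ∂μ) + ∫ ω in Aᶜ, F (t + 1) ω ∂μ :=
            (integral_add_compl hA0 (hF_int (t + 1))).symm
        _ = (∫ ω in A, F (t + 1) ω ∂μ) + ∫ ω in Aᶜ, F t ω ∂μ := by
            rw [setIntegral_congr_fun hA0.compl hcompl]
        _ ≤ (∫ ω in A, F t ω ∂μ) + ∫ ω in Aᶜ, F t ω ∂μ := by linarith [hstep]
        _ = ∫ ω, F t ω ∂μ := integral_add_compl hA0 (hF_int t)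
        _ ≤ 1 := ihv
  -- conclusion
  have hfinal : ∫ ω, g (τ ω) ω ∂μ ≤ 1 := by
    have h := key T le_rfl
    have heq : F T = fun ω => g (τ ω) ω := by
      funext ω
      simp only [hFdef, min_eq_right (hτT ω)]
    rwa [heq] at h
  -- indicator identification
  set N : Set Ω := {ω | ∀ s, 1 ≤ s → s ≤ τ ω → q s ω = 0} with hNdef
  have hN_meas : MeasurableSet N := by
    have hset : N = ⋂ s ∈ Finset.Icc 1 T, ({ω | τ ω < s} ∪ {ω | q s ω = 0}) := by
      ext ω
      simp only [hNdef, Set.mem_setOf_eq, Set.mem_iInter, Finset.mem_Icc, Set.mem_union]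
      constructor
      · intro h s hs
        rcases le_or_gt s (τ ω) with h' | h'
        · exact Or.inr (h s hs.1 h')
        · exact Or.inl h'
      · intro h s h1 h2
        rcases h s ⟨h1, le_trans h2 (hτT ω)⟩ with h' | h'
        · omega
        · exact h'
    rw [hset]
    refine MeasurableSet.biInter (Finset.Icc 1 T).countable_toSet fun s hs => ?_
    refine MeasurableSet.union ?_ ?_
    · exact hτ_meas measurableSet_Iio
    · exact (hq_meas s) (measurableSet_singleton 0)
  have hGτ_ind : (fun ω => G (τ ω) ω) = Set.indicator N 1 := by
    funext ω
    by_cases hω : ω ∈ N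
    · rw [Set.indicator_of_mem hω]
      simp only [hNdef, Set.mem_setOf_eq] at hω
      simp [hG_one (τ ω) ω hω]
    · rw [Set.indicator_of_notMem hω]
      simp only [hNdef, Set.mem_setOf_eq, not_forall] at hω
      obtain ⟨s, h1, h2, h3⟩ := hω
      have hq1 : q s ω = 1 := by
        rcases hq01 s ω with h | h
        · exact absurd h h3
        · exact h
      refine Finset.prod_eq_zero (Finset.mem_Icc.mpr ⟨h1, h2⟩) ?_
      rw [hq1]; ring
  have hGτ_int : Integrable (fun ω => G (τ ω) ω) μ := by
    refine hbdd_int _ (aux_sel_measurable τ hτ_meas T hτT G hG_meas) fun ω => ?_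
    rcases hG01 (τ ω) ω with h | h <;> rw [h] <;> norm_num
  have hhτ_int : Integrable (fun ω => 1 - Real.exp (-(R (τ ω) ω))) μ := by
    refine hbdd_int _ ?_ fun ω => ?_
    · exact aux_sel_measurable τ hτ_meas T hτT
        (fun k ω => 1 - Real.exp (-(R k ω)))
        (fun k => measurable_const.sub ((hR_meas k).neg.exp))
    · have h1 : Real.exp (-(R (τ ω) ω)) ≤ 1 :=
        Real.exp_le_one_iff.mpr (by linarith [hR_nonneg (τ ω) ω])
      have h2 : 0 < Real.exp (-(R (τ ω) ω)) := Real.exp_pos _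
      rw [abs_le]; constructor <;> linarith
  have hsplit : ∫ ω, g (τ ω) ω ∂μ
      = (∫ ω, G (τ ω) ω ∂μ) + ∫ ω, (1 - Real.exp (-(R (τ ω) ω))) ∂μ := by
    rw [← integral_add hGτ_int hhτ_int]
  have hGτ_val : ∫ ω, G (τ ω) ω ∂μ = (μ N).toReal := by
    rw [hGτ_ind]
    exact integral_indicator_one hN_meas
  -- the success set is the complement of N
  have hcompl_set : {ω | ∃ t : ℕ, 1 ≤ t ∧ t ≤ τ ω ∧ q t ω = 1} = Nᶜ := by
    ext ω
    simp only [Set.mem_setOf_eq, Set.mem_compl_iff, hNdef, not_forall]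
    constructor
    · rintro ⟨t, h1, h2, h3⟩
      exact ⟨t, h1, h2, by rw [h3]; norm_num⟩
    · rintro ⟨t, h1, h2, h3⟩
      refine ⟨t, h1, h2, ?_⟩
      rcases hq01 t ω with h | h
      · exact absurd h h3
      · exact h
  have hmeasval : (μ {ω | ∃ t : ℕ, 1 ≤ t ∧ t ≤ τ ω ∧ q t ω = 1}).toReal
      = 1 - (μ N).toReal := by
    rw [hcompl_set, measure_compl hN_meas (measure_ne_top μ N), measure_univ,
      ENNReal.toReal_sub_of_le prob_le_one ENNReal.one_ne_top, ENNReal.toReal_one]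
  rw [ge_iff_le, hmeasval]
  rw [hsplit, hGτ_val] at hfinal
  linarith
end

section
/- Fix x ∈ {0,1}^T, p ∈ [0,1]^T, and let N = #{t : |x_t - p_t| ≥ 1/2}. Let y_1,...,y_T be i.i.d. uniform on {0,1}. Then E_y[|∑_{t=1}^T y_t (x_t - p_t)|] ≥ c·√N for a universal constant c > 0. -/
open Finset

/-- Rademacher sign of a Boolean. -/
private def ee {n : ℕ} (y : Fin n → Bool) (t : Fin n) : ℝ := if y t then 1 else -1

private lemma sum_bool_succ {n : ℕ} (F : (Fin (n + 1) → Bool) → ℝ) :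
    ∑ y : Fin (n + 1) → Bool, F y
      = ∑ b : Bool, ∑ y : Fin n → Bool, F (Fin.cons b y) := by
  have h1 : ∑ y : Fin (n + 1) → Bool, F y
      = ∑ p : Bool × (Fin n → Bool), F (Fin.cons p.1 p.2) :=
    (Fintype.sum_equiv (Fin.consEquiv (fun _ => Bool))
      (fun p => F (Fin.cons p.1 p.2)) F (fun p => rfl)).symm
  rw [h1, Fintype.sum_prod_type]

private lemma cons_sum_t {n : ℕ} (a : Fin (n + 1) → ℝ) (y : Fin n → Bool) :
    (∑ t, ee (Fin.cons true y) t * a t)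
      = a 0 + ∑ t : Fin n, ee y t * a t.succ := by
  rw [Fin.sum_univ_succ]
  simp [ee]

private lemma cons_sum_f {n : ℕ} (a : Fin (n + 1) → ℝ) (y : Fin n → Bool) :
    (∑ t, ee (Fin.cons false y) t * a t)
      = -a 0 + ∑ t : Fin n, ee y t * a t.succ := by
  rw [Fin.sum_univ_succ]
  simp [ee]

private lemma moment2 : ∀ (n : ℕ) (a : Fin n → ℝ),
    ∑ y : Fin n → Bool, (∑ t, ee y t * a t) ^ 2 = 2 ^ n * ∑ t, a t ^ 2 := by
  intro n
  induction n with
  | zero => intro a; simp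
  | succ n ih =>
    intro a
    rw [sum_bool_succ (fun y => (∑ t, ee y t * a t) ^ 2), Fintype.sum_bool]
    rw [← Finset.sum_add_distrib]
    have key : ∀ y : Fin n → Bool,
        (∑ t, ee (Fin.cons true y) t * a t) ^ 2
          + (∑ t, ee (Fin.cons false y) t * a t) ^ 2
        = 2 * (∑ t : Fin n, ee y t * a t.succ) ^ 2 + 2 * a 0 ^ 2 := by
      intro y; rw [cons_sum_t, cons_sum_f]; ring
    rw [Finset.sum_congr rfl fun y _ => key y, Finset.sum_add_distrib,
      ← Finset.mul_sum, ih (fun t => a t.succ), Finset.sum_const, Fin.sum_univ_succ]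
    simp only [Finset.card_univ, Fintype.card_fun, Fintype.card_bool, Fintype.card_fin,
      nsmul_eq_mul]
    push_cast
    ring

private lemma moment4 : ∀ (n : ℕ) (a : Fin n → ℝ),
    ∑ y : Fin n → Bool, (∑ t, ee y t * a t) ^ 4 ≤ 3 * 2 ^ n * (∑ t, a t ^ 2) ^ 2 := by
  intro n
  induction n with
  | zero => intro a; simp
  | succ n ih =>
    intro a
    rw [sum_bool_succ (fun y => (∑ t, ee y t * a t) ^ 4), Fintype.sum_bool]
    rw [← Finset.sum_add_distrib]
    have key : ∀ y : Fin n → Bool,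
        (∑ t, ee (Fin.cons true y) t * a t) ^ 4
          + (∑ t, ee (Fin.cons false y) t * a t) ^ 4
        = 2 * (∑ t : Fin n, ee y t * a t.succ) ^ 4
          + 12 * a 0 ^ 2 * (∑ t : Fin n, ee y t * a t.succ) ^ 2 + 2 * a 0 ^ 4 := by
      intro y; rw [cons_sum_t, cons_sum_f]; ring
    rw [Finset.sum_congr rfl fun y _ => key y, Finset.sum_add_distrib,
      Finset.sum_add_distrib, ← Finset.mul_sum, ← Finset.mul_sum,
      moment2 n (fun t => a t.succ), Finset.sum_const]
    simp only [Finset.card_univ, Fintype.card_fun, Fintype.card_bool, Fintype.card_fin,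
      nsmul_eq_mul]
    have h4 := ih (fun t => a t.succ)
    have hs : (0:ℝ) ≤ ∑ t : Fin n, a t.succ ^ 2 :=
      Finset.sum_nonneg fun _ _ => sq_nonneg _
    have hpow : (0:ℝ) < 2 ^ n := by positivity
    rw [Fin.sum_univ_succ]
    push_cast
    rw [pow_succ (2:ℝ) n]
    nlinarith [h4, mul_nonneg hpow.le (sq_nonneg (a 0 ^ 2)),
      mul_nonneg hpow.le (mul_nonneg (sq_nonneg (a 0)) hs)]

set_option maxHeartbeats 1000000 in
/-- Anticoncentration of the subsampled bias: for `x ∈ {0,1}^T`, `p ∈ [0,1]^T`, and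
`N = #{t : |x_t - p_t| ≥ 1/2}`, averaging over uniform `y ∈ {0,1}^T` gives
`E_y[|∑_t y_t (x_t - p_t)|] ≥ c √N` for a universal constant `c > 0`. -/
theorem subsampled_bias_anticoncentration :
    ∃ c : ℝ, 0 < c ∧
      ∀ (T : ℕ) (x p : Fin T → ℝ),
        (∀ t, x t = 0 ∨ x t = 1) →
        (∀ t, p t ∈ Set.Icc (0:ℝ) 1) →
        (∑ y : Fin T → Bool, |∑ t, (if y t then (1:ℝ) else 0) * (x t - p t)|) / 2^T ≥
          c * Real.sqrt ((Finset.univ.filter fun t => 1/2 ≤ |x t - p t|).card) := by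
  refine ⟨Real.sqrt 3 / 12, by positivity, ?_⟩
  intro T x p hx hp
  set a : Fin T → ℝ := fun t => x t - p t with ha
  set N : ℕ := (Finset.univ.filter fun t => 1/2 ≤ |x t - p t|).card with hN
  set S : (Fin T → Bool) → ℝ := fun y => ∑ t, (if y t then (1:ℝ) else 0) * a t with hS
  have hSsum0 : (0:ℝ) ≤ ∑ y : Fin T → Bool, |S y| :=
    Finset.sum_nonneg fun _ _ => abs_nonneg _
  have hM0 : (0:ℝ) < 2 ^ T := by positivity
  rcases Nat.eq_zero_or_pos N with hN0 | hNpos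
  · rw [hN0, ge_iff_le]
    simp only [Nat.cast_zero, Real.sqrt_zero, mul_zero]
    positivity
  -- notation
  set u : (Fin T → Bool) → ℝ := fun y => |∑ t, ee y t * a t| with hu
  have hu0 : ∀ y, 0 ≤ u y := fun y => abs_nonneg _
  set σ2 : ℝ := ∑ t, a t ^ 2 with hσ2
  -- variance lower bound from N
  have hσN : (N : ℝ) / 4 ≤ σ2 := by
    have hsub : ((Finset.univ.filter fun t => 1/2 ≤ |x t - p t|) : Finset (Fin T))
        ⊆ Finset.univ := Finset.filter_subset _ _
    calc (N : ℝ) / 4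
        = ∑ _t ∈ (Finset.univ.filter fun t => 1/2 ≤ |x t - p t|), (1/4 : ℝ) := by
          rw [Finset.sum_const, nsmul_eq_mul, ← hN]; ring
      _ ≤ ∑ t ∈ (Finset.univ.filter fun t => 1/2 ≤ |x t - p t|), a t ^ 2 := by
          refine Finset.sum_le_sum fun t ht => ?_
          have h := (Finset.mem_filter.mp ht).2
          have : (1/2 : ℝ) ^ 2 ≤ |a t| ^ 2 := by
            apply pow_le_pow_left₀ (by norm_num) h
          rw [sq_abs] at this
          nlinarith
      _ ≤ σ2 := Finset.sum_le_sum_of_subset_of_nonneg hsub fun t _ _ => sq_nonneg _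
  have hσpos : (0:ℝ) < σ2 := by
    have : (1:ℝ) ≤ (N : ℝ) := by exact_mod_cast hNpos
    linarith
  -- symmetrization: sum over signs ≤ 2 * sum over bits
  have hXS : ∀ y : Fin T → Bool, (∑ t, ee y t * a t) = S y - S (fun t => !(y t)) := by
    intro y
    rw [hS, ← Finset.sum_sub_distrib]
    refine Finset.sum_congr rfl fun t _ => ?_
    cases h : y t <;> simp [ee, h]
  have hflip : ∑ y : Fin T → Bool, |S (fun t => !(y t))| = ∑ y : Fin T → Bool, |S y| := by
    refine Fintype.sum_bijective (fun y : Fin T → Bool => fun t => !(y t))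
      (Function.Involutive.bijective fun y => by funext t; simp) _ _ fun y => rfl
  have hA : ∑ y : Fin T → Bool, u y ≤ 2 * ∑ y : Fin T → Bool, |S y| := by
    calc ∑ y : Fin T → Bool, u y
        ≤ ∑ y : Fin T → Bool, (|S y| + |S (fun t => !(y t))|) := by
          refine Finset.sum_le_sum fun y _ => ?_
          rw [hu]; dsimp only; rw [hXS y]; exact abs_sub _ _
      _ = 2 * ∑ y : Fin T → Bool, |S y| := by
          rw [Finset.sum_add_distrib, hflip]; ring
  -- moments
  set A : ℝ := ∑ y : Fin T → Bool, u y with hAdef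
  set B : ℝ := ∑ y : Fin T → Bool, u y ^ 2 with hBdef
  set D : ℝ := ∑ y : Fin T → Bool, u y ^ 3 with hDdef
  set C : ℝ := ∑ y : Fin T → Bool, u y ^ 4 with hCdef
  have hA0 : 0 ≤ A := Finset.sum_nonneg fun y _ => hu0 y
  have hB0 : 0 ≤ B := Finset.sum_nonneg fun y _ => by positivity
  have hD0 : 0 ≤ D := Finset.sum_nonneg fun y _ => by positivity
  have hB : B = 2 ^ T * σ2 := by
    rw [hBdef, hσ2]
    simp only [hu, sq_abs]
    exact moment2 T a
  have hC : C ≤ 3 * 2 ^ T * σ2 ^ 2 := by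
    have h4 : ∀ y : Fin T → Bool, u y ^ 4 = (∑ t, ee y t * a t) ^ 4 := by
      intro y; rw [hu]; dsimp only
      rw [show (4:ℕ) = 2 * 2 from rfl, pow_mul, sq_abs, ← pow_mul]
    rw [hCdef, hσ2]
    simp only [h4]
    exact moment4 T a
  -- Cauchy–Schwarz twice
  have CS1 : B ^ 2 ≤ A * D := by
    have h := Finset.sum_mul_sq_le_sq_mul_sq Finset.univ
      (fun y : Fin T → Bool => Real.sqrt (u y)) (fun y => Real.sqrt (u y) * u y)
    have e1 : ∀ y : Fin T → Bool, Real.sqrt (u y) * (Real.sqrt (u y) * u y) = u y ^ 2 := by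
      intro y; rw [← mul_assoc, Real.mul_self_sqrt (hu0 y), sq]
    have e2 : ∀ y : Fin T → Bool, Real.sqrt (u y) ^ 2 = u y := fun y => Real.sq_sqrt (hu0 y)
    have e3 : ∀ y : Fin T → Bool, (Real.sqrt (u y) * u y) ^ 2 = u y ^ 3 := by
      intro y; rw [mul_pow, Real.sq_sqrt (hu0 y)]; ring
    simp only [e1, e2, e3] at h
    exact h
  have CS2 : D ^ 2 ≤ B * C := by
    have h := Finset.sum_mul_sq_le_sq_mul_sq Finset.univ
      (fun y : Fin T → Bool => u y) (fun y => u y ^ 2)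
    have e1 : ∀ y : Fin T → Bool, u y * u y ^ 2 = u y ^ 3 := fun y => by ring
    have e2 : ∀ y : Fin T → Bool, (u y ^ 2) ^ 2 = u y ^ 4 := fun y => by ring
    simp only [e1, e2] at h
    exact h
  -- combine: A^2 ≥ (2^T)^2 * σ2 / 3
  have h3 : B ^ 4 ≤ A ^ 2 * (B * C) := by
    calc B ^ 4 = (B ^ 2) ^ 2 := by ring
      _ ≤ (A * D) ^ 2 := by
          apply pow_le_pow_left₀ (sq_nonneg B) CS1
      _ = A ^ 2 * D ^ 2 := by ring
      _ ≤ A ^ 2 * (B * C) := mul_le_mul_of_nonneg_left CS2 (sq_nonneg A)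
  have h4 : A ^ 2 * (B * C) ≤ A ^ 2 * (B * (3 * 2 ^ T * σ2 ^ 2)) :=
    mul_le_mul_of_nonneg_left (mul_le_mul_of_nonneg_left hC hB0) (sq_nonneg A)
  have h5 : ((2:ℝ) ^ T * σ2) ^ 4 ≤ A ^ 2 * ((2 ^ T * σ2) * (3 * 2 ^ T * σ2 ^ 2)) := by
    have := h3.trans h4
    rwa [hB] at this
  have hA2 : (2:ℝ) ^ T * ((2:ℝ) ^ T * σ2) ≤ 3 * A ^ 2 := by
    have hpos : (0:ℝ) < (2 ^ T) ^ 2 * σ2 ^ 3 := by positivity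
    nlinarith [h5, hpos]
  -- conclude
  rw [ge_iff_le, le_div_iff₀ hM0]
  have hb2 : (Real.sqrt 3 / 12 * Real.sqrt N * 2 ^ T * 2) ^ 2 ≤ A ^ 2 := by
    have hs3 : Real.sqrt 3 ^ 2 = 3 := Real.sq_sqrt (by norm_num)
    have hsN : Real.sqrt N ^ 2 = (N : ℝ) := Real.sq_sqrt (Nat.cast_nonneg N)
    have hM2 : (0:ℝ) < ((2:ℝ) ^ T) ^ 2 := by positivity
    calc (Real.sqrt 3 / 12 * Real.sqrt N * 2 ^ T * 2) ^ 2
        = ((2:ℝ) ^ T) ^ 2 * (N : ℝ) / 12 := by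
          rw [mul_pow, mul_pow, mul_pow, div_pow, hs3, hsN]; ring
      _ ≤ A ^ 2 := by nlinarith [mul_le_mul_of_nonneg_left hσN hM2.le, hA2]
  have hb : Real.sqrt 3 / 12 * Real.sqrt N * 2 ^ T * 2 ≤ A := by
    refine le_of_pow_le_pow_left₀ (by norm_num) hA0 hb2
  linarith [hA, hb]
end
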